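/- For the radius-1 cellular automaton f on S = {0, 1, ..., m} with local rule F(a,b,c) = b - 1 if b > 0 and c = 0, and F(a,b,c) = b otherwise, the following hold: (1) for every 1 ≤ k < m, the configuration x = ...000.m000... (with the single nonzero cell m at position 0) satisfies f^k(x)_0 ≠ 0, so {0} is the only minimal 0,m-forcing set at level k; (2) for every configuration y with y_1 = 0, f^m(y)_0 = 0, so {1} is a 0,m-forcing set at level m. -/

import Mathlib

/-- For the radius-1 CA on `S = {0,…,m}` that decrements a nonzero
state when its right neighbor is `0` and otherwise keeps it fixed:
(1) for `1 ≤ k < m`, the configuration with a single `m` at the origin satisfies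
`f^[k] x 0 ≠ 0`, and `{0}` is the only minimal `0,m`-forcing set at level `k`;
(2) for every configuration `y` (with values in `S`) with `y 1 = 0` we have
`f^[m] y 0 = 0`, i.e. `{1}` is a `0,m`-forcing set at level `m`. -/
theorem decrement_forcing (m : ℕ) (hm : 1 ≤ m)
    (f : (ℤ → ℕ) → (ℤ → ℕ))
    (hf : ∀ x i, f x i = if 0 < x i ∧ x (i + 1) = 0 then x i - 1 else x i) :
    (∀ k, 1 ≤ k → k < m →
      f^[k] (fun i => if i = 0 then m else 0) 0 ≠ 0 ∧
      ∀ V : Finset ℤ,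
        ((∀ x : ℤ → ℕ, (∀ i, x i ≤ m) → (∀ i ∈ V, x i = 0) → f^[k] x 0 = 0) ∧
          ∀ W ⊂ V, ¬ (∀ x : ℤ → ℕ, (∀ i, x i ≤ m) → (∀ i ∈ W, x i = 0) →
            f^[k] x 0 = 0)) →
        V = {0}) ∧
    ((∀ y : ℤ → ℕ, (∀ i, y i ≤ m) → y 1 = 0 → f^[m] y 0 = 0) ∧
      (∀ x : ℤ → ℕ, (∀ i, x i ≤ m) → (∀ i ∈ ({1} : Finset ℤ), x i = 0) →
        f^[m] x 0 = 0)) := by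
  -- a zero cell stays zero forever
  have hzero : ∀ (n : ℕ) (x : ℤ → ℕ) (j : ℤ), x j = 0 → f^[n] x j = 0 := by
    intro n
    induction n with
    | zero => intro x j h; simpa using h
    | succ n ih =>
      intro x j h
      rw [Function.iterate_succ_apply]
      exact ih _ _ (by rw [hf]; simp [h])
  -- if x 1 = 0, cell 0 decrements each step
  have hdec : ∀ (n : ℕ) (x : ℤ → ℕ), x 1 = 0 → f^[n] x 0 = x 0 - n := by
    intro n
    induction n with
    | zero => intro x h; simp
    | succ n ih =>
      intro x h
      rw [Function.iterate_succ_apply, ih _ (by rw [hf]; simp [h])]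
      rw [hf]
      rcases Nat.eq_zero_or_pos (x 0) with h0 | h0
      · simp [h0, h]
      · have : (0:ℤ) + 1 = 1 := by norm_num
        rw [this, h]
        simp only [h0, and_true, if_pos, Nat.sub_sub]
        omega
  constructor
  · intro k hk1 hkm
    have hx1 : (fun i : ℤ => if i = 0 then m else 0) 1 = 0 := by norm_num
    have hx : f^[k] (fun i : ℤ => if i = 0 then m else 0) 0 = m - k := by
      rw [hdec k _ hx1]; simp
    constructor
    · rw [hx]; omega
    · rintro V ⟨hforce, hmin⟩
      have h0V : (0:ℤ) ∈ V := by
        by_contra h0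
        have := hforce (fun i : ℤ => if i = 0 then m else 0)
          (fun i => by split <;> omega)
          (fun i hi => by
            rw [if_neg]; rintro rfl; exact h0 hi)
        rw [hx] at this; omega
      have hsing : ∀ x : ℤ → ℕ, (∀ i, x i ≤ m) → (∀ i ∈ ({0}:Finset ℤ), x i = 0) →
          f^[k] x 0 = 0 := fun x _ h => hzero k x 0 (h 0 (by simp))
      by_contra hne
      have hss : ({0}:Finset ℤ) ⊂ V := by
        constructor
        · simpa using h0V
        · intro hsub
          exact hne (le_antisymm hsub (by simpa using h0V))
      exact hmin _ hss hsing
  · constructor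
    · intro y hy h1
      rw [hdec m y h1]
      exact Nat.sub_eq_zero_of_le (hy 0)
    · intro x hx h1
      rw [hdec m x (h1 1 (by simp))]
      exact Nat.sub_eq_zero_of_le (hx 0)
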